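/- A compact Hausdorff space X of weight at most ℵ₁ is Valdivia compact if and only if X is homeomorphic to the limit of a continuous inverse sequence indexed by ω₁ of compact metrizable spaces whose bonding maps are retractions. -/

import Mathlib

open Set Filter Topology

universe u v

/-- A `ι`-indexed family of topological spaces with bonding maps (the data of an
inverse sequence). -/
structure Tower (ι : Type v) [LinearOrder ι] where
  S : ι → Type u
  topo : ∀ α, TopologicalSpace (S α)
  r : ∀ ⦃α β : ι⦄, α ≤ β → S β → S α

attribute [instance] Tower.topo

namespace Tower

variable {ι : Type v} [LinearOrder ι]

/-- The limit of the tower: its space of threads. -/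
abbrev Lim (T : Tower.{u, v} ι) : Type (max u v) :=
  {x : ∀ α, T.S α // ∀ ⦃α β : ι⦄ (h : α ≤ β), T.r h (x β) = x α}

/-- The tower is a continuous inverse sequence of compact Hausdorff spaces:
all spaces are compact Hausdorff, the bonding maps are continuous surjections
satisfying the identity and composition laws, and at every limit point `δ` of the
index set the map `S δ → Π_{α<δ} S α` is injective. -/
structure IsContInvSeq (T : Tower.{u, v} ι) : Prop where
  compact : ∀ α, CompactSpace (T.S α)
  t2 : ∀ α, T2Space (T.S α)
  continuous : ∀ ⦃α β : ι⦄ (h : α ≤ β), Continuous (T.r h)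
  surjective : ∀ ⦃α β : ι⦄ (h : α ≤ β), Function.Surjective (T.r h)
  map_id : ∀ (α : ι) (x : T.S α), T.r (le_refl α) x = x
  map_comp : ∀ ⦃α β γ : ι⦄ (h₁ : α ≤ β) (h₂ : β ≤ γ) (x : T.S γ),
    T.r h₁ (T.r h₂ x) = T.r (h₁.trans h₂) x
  limit_inj : ∀ δ : ι, (∃ α, α < δ) → (∀ α, α < δ → ∃ β, α < β ∧ β < δ) →
    ∀ x y : T.S δ, (∀ (α : ι) (h : α < δ), T.r h.le x = T.r h.le y) → x = y

end Tower

/-- A continuous surjection which admits a continuous right inverse. -/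
def IsRetraction {X Y : Type*} [TopologicalSpace X] [TopologicalSpace Y]
    (f : X → Y) : Prop :=
  Continuous f ∧ Function.Surjective f ∧ ∃ g : Y → X, Continuous g ∧ f ∘ g = id

/-- `Σ(T)`: the points of the Tikhonov cube `[0,1]^T` with countable support. -/
def SigmaProd (T : Type*) : Set (T → unitInterval) :=
  {x | {t | x t ≠ 0}.Countable}

/-- A Valdivia embedding into the cube `[0,1]^T`. -/
def IsValdiviaEmbedding {X : Type*} [TopologicalSpace X] {T : Type*}
    (h : X → T → unitInterval) : Prop :=
  Topology.IsEmbedding h ∧ Set.range h = closure (Set.range h ∩ SigmaProd T)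

/-- A space is Valdivia compact if it admits a Valdivia embedding into some cube. -/
def IsValdivia (X : Type u) [TopologicalSpace X] : Prop :=
  ∃ (T : Type u) (h : X → T → unitInterval), IsValdiviaEmbedding h

/-- The weight of a topological space: the least cardinality of a base. -/
noncomputable def tweight (X : Type u) [TopologicalSpace X] : Cardinal.{u} :=
  sInf {c | ∃ B : Set (Set X), TopologicalSpace.IsTopologicalBasis B ∧ Cardinal.mk ↥B = c}



section Statement12AuxSection
open Set Filter Topology TopologicalSpace Cardinal Ordinal
open scoped Classical

namespace Statement12Aux

/-- The index order: a well order of type `ω₁`. -/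
abbrev Idx : Type u := (Cardinal.aleph 1 : Cardinal.{u}).ord.ToType

lemma mk_Idx : #(Idx.{u}) = Cardinal.aleph 1 := by
  simpa [Cardinal.card_ord] using Cardinal.mk_toType (Cardinal.aleph 1).ord

instance : Nonempty (Idx.{u}) := by
  rw [← Cardinal.mk_ne_zero_iff, mk_Idx]
  exact (Cardinal.aleph0_lt_aleph_one.trans_le' (by simp)).ne'

lemma countable_Iio (δ : Idx.{u}) : (Set.Iio δ).Countable :=
  (Cardinal.countable_iff_lt_aleph_one _).2 (Cardinal.mk_Iio_ord_toType δ)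

lemma countable_Iic (δ : Idx.{u}) : (Set.Iic δ).Countable := by
  rw [← Set.Iio_union_right]
  exact (countable_Iio δ).union (Set.countable_singleton _)

lemma not_countable_univ : ¬ (Set.univ : Set (Idx.{u})).Countable := by
  rw [Cardinal.countable_iff_lt_aleph_one, Cardinal.mk_univ, mk_Idx]
  exact lt_irrefl _

instance : NoMaxOrder (Idx.{u}) := by
  constructor
  intro a
  by_contra h
  push_neg at h
  exact not_countable_univ (by
    have : (Set.univ : Set (Idx.{u})) = Set.Iic a := by
      ext x; simp [h x]
    rw [this]; exact countable_Iic a)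

/-- the "limit point" premise appearing in `Tower.IsContInvSeq.limit_inj`. -/
def IsLim (δ : Idx.{u}) : Prop :=
  (∃ α, α < δ) ∧ ∀ α, α < δ → ∃ β, α < β ∧ β < δ

lemma exists_nonlim_gt (γ : Idx.{u}) : ∃ δ, γ < δ ∧ ¬ IsLim δ := by
  have hne : {β : Idx.{u} | γ < β}.Nonempty := exists_gt γ
  obtain ⟨m, hm, hmin⟩ := wellFounded_lt.has_min _ hne
  refine ⟨m, hm, fun hl => ?_⟩
  obtain ⟨β, h1, h2⟩ := hl.2 γ hm
  exact hmin β h1 h2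

end Statement12Aux

namespace Statement12Aux

/-- a rational interval inside an open neighborhood in the unit interval. -/
lemma exists_rat_box {U : Set unitInterval} (hU : IsOpen U) {v : unitInterval} (hv : v ∈ U) :
    ∃ p q : ℚ, (p : ℝ) < v ∧ (v : ℝ) < q ∧
      ∀ w : unitInterval, (p : ℝ) < w → (w : ℝ) < q → w ∈ U := by
  obtain ⟨V, hV, rfl⟩ := isOpen_induced_iff.1 hU
  obtain ⟨ε, hε, hball⟩ := Metric.isOpen_iff.1 hV v hv
  obtain ⟨p, hp1, hp2⟩ := exists_rat_btwn (show (v : ℝ) - ε < v by linarith)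
  obtain ⟨q, hq1, hq2⟩ := exists_rat_btwn (show (v : ℝ) < v + ε by linarith)
  refine ⟨p, q, hp2, hq1, fun w h1 h2 => hball ?_⟩
  rw [Metric.mem_ball, Real.dist_eq, abs_lt]
  constructor <;> linarith

variable {τ : Type u}

/-- restriction of a point of the cube to a set of coordinates, zero elsewhere. -/
noncomputable def chop (A : Set τ) (x : τ → unitInterval) : τ → unitInterval :=
  fun t => if t ∈ A then x t else 0

lemma chop_continuous (A : Set τ) : Continuous (chop A) := by
  refine continuous_pi fun t => ?_
  by_cases h : t ∈ A <;> simp only [chop, h, if_true, if_false]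
  · exact continuous_apply t
  · exact continuous_const

lemma chop_apply_mem {A : Set τ} {x : τ → unitInterval} {t : τ} (ht : t ∈ A) :
    chop A x t = x t := by simp [chop, ht]

lemma chop_apply_not_mem {A : Set τ} {x : τ → unitInterval} {t : τ} (ht : t ∉ A) :
    chop A x t = 0 := by simp [chop, ht]

lemma chop_chop {A B : Set τ} (hAB : A ⊆ B) (x : τ → unitInterval) :
    chop A (chop B x) = chop A x := by
  funext t
  by_cases h : t ∈ A
  · rw [chop_apply_mem h, chop_apply_mem h, chop_apply_mem (hAB h)]
  · rw [chop_apply_not_mem h, chop_apply_not_mem h]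

lemma chop_eq_self {A : Set τ} {x : τ → unitInterval}
    (h : ∀ t, t ∉ A → x t = 0) : chop A x = x := by
  funext t
  by_cases ht : t ∈ A
  · exact chop_apply_mem ht
  · rw [chop_apply_not_mem ht, h t ht]

lemma chop_mem_sigma {A : Set τ} {x : τ → unitInterval} (hx : x ∈ SigmaProd τ) :
    chop A x ∈ SigmaProd τ := by
  refine Set.Countable.mono ?_ hx
  intro t ht
  simp only [SigmaProd, Set.mem_setOf_eq] at ht ⊢
  intro h0
  refine ht ?_
  by_cases h : t ∈ A
  · rw [chop_apply_mem h]; exact h0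
  · exact chop_apply_not_mem h

lemma chop_mem_sigma_of_countable {A : Set τ} (hA : A.Countable) (x : τ → unitInterval) :
    chop A x ∈ SigmaProd τ := by
  refine Set.Countable.mono ?_ hA
  intro t ht
  simp only [SigmaProd, Set.mem_setOf_eq] at ht
  by_contra h
  exact ht (chop_apply_not_mem h)

end Statement12Aux

namespace Statement12Aux

lemma exists_small_basis {X : Type u} [TopologicalSpace X] (hw : tweight X ≤ Cardinal.aleph 1) :
    ∃ B : Set (Set X), IsTopologicalBasis B ∧ #B ≤ Cardinal.aleph 1 := by
  have hne : {c | ∃ B : Set (Set X), IsTopologicalBasis B ∧ #↥B = c}.Nonempty :=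
    ⟨_, {U | IsOpen U}, isTopologicalBasis_opens, rfl⟩
  obtain ⟨B, hB, hc⟩ := csInf_mem hne
  exact ⟨B, hB, hc.le.trans hw⟩

lemma exists_separating {X : Type u} [TopologicalSpace X] [T2Space X] {T₀ : Type u}
    {h₀ : X → T₀ → unitInterval} (hc : Continuous h₀) (hinj : Function.Injective h₀)
    (hw : tweight X ≤ Cardinal.aleph 1) :
    ∃ T : Set T₀, #T ≤ Cardinal.aleph 1 ∧
      ∀ x y : X, (∀ t ∈ T, h₀ x t = h₀ y t) → x = y := by
  obtain ⟨B, hB, hBc⟩ := exists_small_basis hw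
  set S : Set (Set X × Set X) :=
    {p | p.1 ∈ B ∧ p.2 ∈ B ∧ ∃ t, ∀ x ∈ p.1, ∀ y ∈ p.2, h₀ x t ≠ h₀ y t} with hS
  have hchoice : ∀ p : S, ∃ t, ∀ x ∈ (p : Set X × Set X).1, ∀ y ∈ (p : Set X × Set X).2,
      h₀ x t ≠ h₀ y t := fun p => p.2.2.2
  choose c hcP using hchoice
  refine ⟨Set.range c, ?_, ?_⟩
  · refine (Cardinal.mk_range_le).trans ?_
    have h1 : #S ≤ #(↥B × ↥B) := by
      have : #S ≤ #(B ×ˢ B : Set (Set X × Set X)) := by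
        apply Cardinal.mk_le_mk_of_subset
        intro p hp; exact ⟨hp.1, hp.2.1⟩
      refine this.trans ?_
      exact le_of_eq (Cardinal.mk_congr (Equiv.Set.prod B B))
    refine h1.trans ?_
    rw [Cardinal.mk_prod]; simp only [Cardinal.lift_id]
    calc #B * #B ≤ Cardinal.aleph 1 * Cardinal.aleph 1 := mul_le_mul' hBc hBc
      _ = Cardinal.aleph 1 := Cardinal.mul_eq_self (Cardinal.aleph0_le_aleph 1)
  · intro x y hxy
    by_contra hne
    have : h₀ x ≠ h₀ y := fun h => hne (hinj h)
    obtain ⟨t₀, ht₀⟩ : ∃ t, h₀ x t ≠ h₀ y t := by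
      by_contra h; push_neg at h; exact this (funext h)
    obtain ⟨U, V, hU, hV, hxU, hyV, hUV⟩ := t2_separation ht₀
    have hcoord : ∀ z : T₀, Continuous fun w : X => h₀ w z :=
      fun z => (continuous_apply z).comp hc
    obtain ⟨b₁, hb₁B, hxb₁, hb₁⟩ := hB.exists_subset_of_mem_open
      (show x ∈ (fun w => h₀ w t₀) ⁻¹' U from hxU) ((hU.preimage (hcoord t₀)))
    obtain ⟨b₂, hb₂B, hyb₂, hb₂⟩ := hB.exists_subset_of_mem_open
      (show y ∈ (fun w => h₀ w t₀) ⁻¹' V from hyV) ((hV.preimage (hcoord t₀)))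
    have hpS : (b₁, b₂) ∈ S := by
      refine ⟨hb₁B, hb₂B, t₀, fun a ha b hb => ?_⟩
      intro heq
      have h1 : h₀ a t₀ ∈ U := hb₁ ha
      have h2 : h₀ b t₀ ∈ V := hb₂ hb
      rw [heq] at h1
      exact (Set.disjoint_left.1 hUV h1) h2
    have := hcP ⟨(b₁, b₂), hpS⟩ x hxb₁ y hyb₂
    exact this (hxy _ ⟨⟨(b₁, b₂), hpS⟩, rfl⟩)

/-- Reduction: a Valdivia compact of weight `≤ ℵ₁` has a Valdivia embedding into a cube
with a nonempty index set of size `≤ ℵ₁`. -/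
lemma exists_small_valdivia_embedding {X : Type u} [TopologicalSpace X] [CompactSpace X]
    [T2Space X] (hw : tweight X ≤ Cardinal.aleph 1) (hv : IsValdivia X) :
    ∃ (τ : Type u) (h₁ : X → τ → unitInterval), Nonempty τ ∧ #τ ≤ Cardinal.aleph 1 ∧
      IsValdiviaEmbedding h₁ := by
  obtain ⟨T₀, h₀, hemb, hsig⟩ := hv
  obtain ⟨T, hTc, hTsep⟩ := exists_separating hemb.continuous hemb.injective hw
  refine ⟨↥T ⊕ PUnit.{u+1}, ?_, ⟨Sum.inr PUnit.unit⟩, ?_, ?_, ?_⟩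
  · exact fun x s => Sum.rec (fun t => h₀ x t.1) (fun _ => 0) s
  · rw [Cardinal.mk_sum, Cardinal.lift_id, Cardinal.lift_id, Cardinal.mk_punit]
    calc #T + 1 ≤ Cardinal.aleph 1 + Cardinal.aleph 1 :=
          add_le_add hTc (one_le_aleph0.trans (Cardinal.aleph0_le_aleph 1))
      _ = Cardinal.aleph 1 := Cardinal.add_eq_self (Cardinal.aleph0_le_aleph 1)
  · -- embedding
    set π : (T₀ → unitInterval) → (↥T ⊕ PUnit.{u+1}) → unitInterval :=
      fun f s => Sum.rec (fun t => f t.1) (fun _ => 0) s with hπ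
    have hπc : Continuous π := by
      refine continuous_pi fun s => ?_
      cases s with
      | inl t => exact continuous_apply t.1
      | inr _ => exact continuous_const
    have hcont : Continuous fun x => π (h₀ x) := hπc.comp hemb.continuous
    have hinj : Function.Injective fun x => π (h₀ x) := by
      intro x y hxy
      refine hTsep x y fun t ht => ?_
      exact congrFun hxy (Sum.inl ⟨t, ht⟩)
    exact (hcont.isClosedEmbedding hinj).isEmbedding
  · -- sigma condition
    set π : (T₀ → unitInterval) → (↥T ⊕ PUnit.{u+1}) → unitInterval :=
      fun f s => Sum.rec (fun t => f t.1) (fun _ => 0) s with hπ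
    have hπc : Continuous π := by
      refine continuous_pi fun s => ?_
      cases s with
      | inl t => exact continuous_apply t.1
      | inr _ => exact continuous_const
    set h₁ : X → (↥T ⊕ PUnit.{u+1}) → unitInterval := fun x => π (h₀ x) with hh₁
    have hcont : Continuous h₁ := hπc.comp hemb.continuous
    apply le_antisymm
    · -- range ⊆ closure (range ∩ Σ)
      rintro _ ⟨x, rfl⟩
      have hx : h₀ x ∈ closure (Set.range h₀ ∩ SigmaProd T₀) := by
        rw [← hsig]; exact ⟨x, rfl⟩
      have : π (h₀ x) ∈ π '' closure (Set.range h₀ ∩ SigmaProd T₀) := ⟨_, hx, rfl⟩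
      have h2 : π (h₀ x) ∈ closure (π '' (Set.range h₀ ∩ SigmaProd T₀)) :=
        image_closure_subset_closure_image hπc this
      refine closure_mono ?_ h2
      rintro _ ⟨d, ⟨⟨z, rfl⟩, hdσ⟩, rfl⟩
      refine ⟨⟨z, rfl⟩, ?_⟩
      have : {s : ↥T ⊕ PUnit.{u+1} | π (h₀ z) s ≠ 0} ⊆
          Sum.inl '' (Subtype.val ⁻¹' {t | h₀ z t ≠ 0}) := by
        rintro (⟨t, ht⟩ | _) hs
        · exact ⟨⟨t, ht⟩, hs, rfl⟩
        · simp [hπ] at hs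
      exact Set.Countable.mono this ((hdσ.preimage Subtype.val_injective).image _)
    · -- closure (range ∩ Σ) ⊆ range
      have : IsClosed (Set.range h₁) := (isCompact_range hcont).isClosed
      calc closure (Set.range h₁ ∩ SigmaProd _) ⊆ closure (Set.range h₁) :=
            closure_mono Set.inter_subset_left
        _ = Set.range h₁ := this.closure_eq

end Statement12Aux

namespace Statement12Aux

lemma countable_lists {α : Type u} {s : Set α} (h : s.Countable) :
    {l : List α | ∀ x ∈ l, x ∈ s}.Countable := by
  have : Countable ↥s := h.to_subtype
  have key : ∀ l : List α, (∀ x ∈ l, x ∈ s) →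
      l ∈ Set.range (List.map (Subtype.val : ↥s → α)) := by
    intro l
    induction l with
    | nil => exact fun _ => ⟨[], rfl⟩
    | cons a t ih =>
      intro hl
      obtain ⟨t', ht'⟩ := ih fun x hx => hl x (List.mem_cons_of_mem a hx)
      exact ⟨⟨a, hl a (List.mem_cons_self)⟩ :: t', by simp [ht']⟩
  exact (Set.countable_range _).mono key

section Closure

variable {τ : Type u} (K : Set (τ → unitInterval))

/-- `D`: the countably-supported part of `K`. -/
def Dset : Set (τ → unitInterval) := K ∩ SigmaProd τ

/-- a set of coordinates is suitable if chopping along it maps `D` into `K`. -/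
def Suitable (A : Set τ) : Prop := ∀ x ∈ Dset K, chop A x ∈ K

/-- approximation requests: a list of coordinates with rational intervals. -/
def Hits (l : List (τ × ℚ × ℚ)) : Prop :=
  ∃ y ∈ Dset K, ∀ e ∈ l, (e.2.1 : ℝ) < y e.1 ∧ (y e.1 : ℝ) < e.2.2

/-- a chosen witness for each satisfiable request. -/
noncomputable def wit (l : List (τ × ℚ × ℚ)) : τ → unitInterval :=
  if h : Hits K l then h.choose else fun _ => 0

lemma wit_mem {l : List (τ × ℚ × ℚ)} (h : Hits K l) : wit K l ∈ Dset K := by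
  rw [wit, dif_pos h]; exact h.choose_spec.1

lemma wit_spec {l : List (τ × ℚ × ℚ)} (h : Hits K l) :
    ∀ e ∈ l, ((e.2.1 : ℝ) < wit K l e.1 ∧ ((wit K l e.1 : ℝ) < e.2.2)) := by
  rw [wit, dif_pos h]; exact h.choose_spec.2

lemma wit_support_countable (l : List (τ × ℚ × ℚ)) : {t | wit K l t ≠ 0}.Countable := by
  by_cases h : Hits K l
  · rw [wit, dif_pos h]; exact h.choose_spec.1.2
  · rw [wit, dif_neg h]; simp

/-- one step of the closing-off procedure. -/
def step (A : Set τ) : Set τ :=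
  A ∪ ⋃ (l : List (τ × ℚ × ℚ)) (_ : (∀ e ∈ l, e.1 ∈ A) ∧ Hits K l), {t | wit K l t ≠ 0}

lemma subset_step (A : Set τ) : A ⊆ step K A := Set.subset_union_left

lemma step_countable {A : Set τ} (hA : A.Countable) : (step K A).Countable := by
  refine hA.union ?_
  have : (⋃ (l : List (τ × ℚ × ℚ)) (_ : (∀ e ∈ l, e.1 ∈ A) ∧ Hits K l),
      {t | wit K l t ≠ 0}) ⊆
      ⋃ l ∈ {l : List (τ × ℚ × ℚ) | ∀ e ∈ l, e ∈ (A ×ˢ (Set.univ : Set (ℚ × ℚ)))},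
        {t | wit K l t ≠ 0} := by
    refine Set.iUnion_mono fun l => ?_
    refine Set.iUnion_subset fun hl => ?_
    exact Set.subset_iUnion_of_subset (fun e he => ⟨hl.1 e he, trivial⟩) subset_rfl
  refine Set.Countable.mono this ?_
  refine Set.Countable.biUnion ?_ fun l _ => wit_support_countable K l
  exact countable_lists (hA.prod Set.countable_univ)

/-- the closing-off of a set of coordinates. -/
def clos (A : Set τ) : Set τ := ⋃ n, (step K)^[n] A

lemma subset_clos (A : Set τ) : A ⊆ clos K A :=
  Set.subset_iUnion_of_subset 0 subset_rfl

lemma clos_countable {A : Set τ} (hA : A.Countable) : (clos K A).Countable := by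
  refine Set.countable_iUnion fun n => ?_
  induction n with
  | zero => exact hA
  | succ n ih => rw [Function.iterate_succ_apply']; exact step_countable K ih

lemma iterate_mono_step (A : Set τ) {m n : ℕ} (h : m ≤ n) :
    (step K)^[m] A ⊆ (step K)^[n] A := by
  induction n with
  | zero => simpa [Nat.le_zero.1 h] using subset_rfl
  | succ n ih =>
    rcases Nat.le_succ_iff.1 h with h' | h'
    · rw [Function.iterate_succ_apply']
      exact (ih h').trans (subset_step K _)
    · simp [h']

end Closure

end Statement12Aux

namespace Statement12Aux

lemma finset_subset_iUnion {α : Type u} {s : ℕ → Set α}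
    (hmono : ∀ {m n : ℕ}, m ≤ n → s m ⊆ s n) (F : Finset α)
    (h : ∀ t ∈ F, t ∈ ⋃ n, s n) : ∃ n, ∀ t ∈ F, t ∈ s n := by
  classical
  induction F using Finset.induction with
  | empty => exact ⟨0, by simp⟩
  | insert a F' ha ih =>
    obtain ⟨n, hn⟩ := ih fun t ht => h t (Finset.mem_insert_of_mem ht)
    obtain ⟨m, hm⟩ := Set.mem_iUnion.1 (h a (Finset.mem_insert_self a F'))
    refine ⟨max n m, fun t ht => ?_⟩
    rcases Finset.mem_insert.1 ht with rfl | ht'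
    · exact hmono (le_max_right n m) hm
    · exact hmono (le_max_left n m) (hn t ht')

variable {τ : Type u} {K : Set (τ → unitInterval)}

/-- the closing-off of any set of coordinates is suitable. -/
lemma clos_suitable (hKD : K = closure (Dset K)) (A₀ : Set τ) :
    Suitable K (clos K A₀) := by
  intro x hx
  set B := clos K A₀ with hB
  rw [hKD]
  rw [(isTopologicalBasis_pi (fun _ : τ => isTopologicalBasis_opens)).mem_closure_iff]
  rintro o ⟨U, F, hUF, rfl⟩ hmem
  simp only [Set.mem_pi, Finset.coe_mem, Finset.mem_coe] at hmem
  -- rational boxes around the values of `chop B x`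
  have h1 : ∀ t : τ, ∃ pq : ℚ × ℚ, t ∈ F →
      ((pq.1 : ℝ) < chop B x t ∧ ((chop B x t : ℝ) < pq.2) ∧
        ∀ w : unitInterval, (pq.1 : ℝ) < w → (w : ℝ) < pq.2 → w ∈ U t) := by
    intro t
    by_cases ht : t ∈ F
    · obtain ⟨p, q, h₁, h₂, h₃⟩ := exists_rat_box (hUF t ht) (hmem t ht)
      exact ⟨(p, q), fun _ => ⟨h₁, h₂, h₃⟩⟩
    · exact ⟨(0, 0), fun h => absurd h ht⟩
  choose pq hpq using h1
  -- the filtered list of requests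
  set F' := F.filter (fun t => t ∈ B) with hF'
  obtain ⟨n, hn⟩ := finset_subset_iUnion (fun {m n} h => iterate_mono_step K A₀ h) F'
    (fun t ht => (Finset.mem_filter.1 ht).2)
  set l : List (τ × ℚ × ℚ) := F'.toList.map (fun t => (t, pq t)) with hl
  have hl1 : ∀ e ∈ l, e.1 ∈ (step K)^[n] A₀ := by
    rintro e he
    obtain ⟨t, ht, rfl⟩ := List.mem_map.1 he
    exact hn t (Finset.mem_toList.1 ht)
  have hhits : Hits K l := by
    refine ⟨x, hx, ?_⟩
    rintro e he
    obtain ⟨t, ht, rfl⟩ := List.mem_map.1 he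
    have htF := Finset.mem_filter.1 (Finset.mem_toList.1 ht)
    have h2 := hpq t htF.1
    rw [chop_apply_mem htF.2] at h2
    exact ⟨h2.1, h2.2.1⟩
  set y := wit K l with hy
  have hyD : y ∈ Dset K := wit_mem K hhits
  have hysupp : {t | y t ≠ 0} ⊆ B := by
    intro t ht
    have : t ∈ step K ((step K)^[n] A₀) := by
      refine Set.mem_union_right _ ?_
      exact Set.mem_iUnion₂.2 ⟨l, ⟨hl1, hhits⟩, ht⟩
    rw [show step K ((step K)^[n] A₀) = (step K)^[n+1] A₀ from
      (Function.iterate_succ_apply' (step K) n A₀).symm] at this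
    exact Set.mem_iUnion.2 ⟨n + 1, this⟩
  refine ⟨y, ?_, hyD⟩
  simp only [Set.mem_pi, Finset.mem_coe]
  intro t ht
  by_cases htB : t ∈ B
  · have htF' : t ∈ F' := Finset.mem_filter.2 ⟨ht, htB⟩
    have hel : (t, pq t) ∈ l := List.mem_map.2 ⟨t, Finset.mem_toList.2 htF', rfl⟩
    obtain ⟨hw1, hw2⟩ := wit_spec K hhits _ hel
    exact (hpq t ht).2.2 _ hw1 hw2
  · have : y t = 0 := by
      by_contra h0
      exact htB (hysupp h0)
    rw [this]
    have h0 : chop B x t = 0 := chop_apply_not_mem htB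
    have := hmem t ht
    rwa [h0] at this

/-- a monotone union of suitable sets over a (nonempty, directed) index is suitable. -/
lemma suitable_iUnion_chain {γ : Type*} [Nonempty γ] [SemilatticeSup γ]
    (hKcl : IsClosed K) (f : γ → Set τ) (hmono : Monotone f)
    (hsuit : ∀ i, Suitable K (f i)) : Suitable K (⋃ i, f i) := by
  intro x hx
  have htend : Tendsto (fun i => chop (f i) x) atTop (nhds (chop (⋃ i, f i) x)) := by
    rw [tendsto_pi_nhds]
    intro t
    by_cases ht : t ∈ ⋃ i, f i
    · obtain ⟨i₀, hi₀⟩ := Set.mem_iUnion.1 ht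
      rw [chop_apply_mem ht]
      refine Filter.Tendsto.congr' ?_ tendsto_const_nhds
      filter_upwards [Filter.eventually_ge_atTop i₀] with i hi
      rw [chop_apply_mem (hmono hi hi₀)]
    · rw [chop_apply_not_mem ht]
      refine Filter.Tendsto.congr' ?_ tendsto_const_nhds
      filter_upwards with i
      rw [chop_apply_not_mem (fun h => ht (Set.mem_iUnion.2 ⟨i, h⟩))]
  exact hKcl.mem_of_tendsto htend (Filter.Eventually.of_forall fun i => hsuit i x hx)

end Statement12Aux

namespace Statement12Aux

variable {τ : Type u} (K : Set (τ → unitInterval)) (e : Idx.{u} → τ)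

/-- the transfinite chain of suitable coordinate sets. -/
noncomputable def Tchain : Idx.{u} → Set τ :=
  (wellFounded_lt (α := Idx.{u})).fix fun δ rec =>
    if IsLim δ then ⋃ γ : ↥(Set.Iio δ), rec γ γ.2
    else clos K ((e '' Set.Iic δ) ∪ ⋃ γ : ↥(Set.Iio δ), rec γ γ.2)

lemma Tchain_eq (δ : Idx.{u}) :
    Tchain K e δ = if IsLim δ then ⋃ γ : ↥(Set.Iio δ), Tchain K e γ
    else clos K ((e '' Set.Iic δ) ∪ ⋃ γ : ↥(Set.Iio δ), Tchain K e γ) := by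
  rw [Tchain, WellFounded.fix_eq]

lemma Tchain_limit {δ : Idx.{u}} (h : IsLim δ) :
    Tchain K e δ = ⋃ γ : ↥(Set.Iio δ), Tchain K e γ := by
  rw [Tchain_eq, if_pos h]

lemma Tchain_nonlimit {δ : Idx.{u}} (h : ¬ IsLim δ) :
    Tchain K e δ = clos K ((e '' Set.Iic δ) ∪ ⋃ γ : ↥(Set.Iio δ), Tchain K e γ) := by
  rw [Tchain_eq, if_neg h]

lemma Tchain_lt_subset {γ δ : Idx.{u}} (h : γ < δ) : Tchain K e γ ⊆ Tchain K e δ := by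
  have hsub : Tchain K e γ ⊆ ⋃ β : ↥(Set.Iio δ), Tchain K e β :=
    Set.subset_iUnion_of_subset ⟨γ, h⟩ subset_rfl
  by_cases hl : IsLim δ
  · rw [Tchain_limit K e hl]; exact hsub
  · rw [Tchain_nonlimit K e hl]
    exact hsub.trans (Set.subset_union_right.trans (subset_clos K _))

lemma Tchain_mono : Monotone (Tchain K e) := by
  intro γ δ h
  rcases eq_or_lt_of_le h with rfl | h'
  · exact le_rfl
  · exact Tchain_lt_subset K e h'

lemma Tchain_countable (δ : Idx.{u}) : (Tchain K e δ).Countable := by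
  induction δ using (wellFounded_lt (α := Idx.{u})).induction with
  | _ δ ih =>
    have hU : (⋃ γ : ↥(Set.Iio δ), Tchain K e γ).Countable := by
      have : Countable ↥(Set.Iio δ) := (countable_Iio δ).to_subtype
      exact Set.countable_iUnion fun γ => ih γ γ.2
    by_cases hl : IsLim δ
    · rw [Tchain_limit K e hl]; exact hU
    · rw [Tchain_nonlimit K e hl]
      exact clos_countable K (((countable_Iic δ).image e).union hU)

lemma Tchain_suitable (hKD : K = closure (Dset K)) (δ : Idx.{u}) :
    Suitable K (Tchain K e δ) := by
  induction δ using (wellFounded_lt (α := Idx.{u})).induction with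
  | _ δ ih =>
    by_cases hl : IsLim δ
    · rw [Tchain_limit K e hl]
      have hne : Nonempty ↥(Set.Iio δ) := by
        obtain ⟨α, hα⟩ := hl.1
        exact ⟨⟨α, hα⟩⟩
      have hKcl : IsClosed K := by
        rw [hKD]; exact isClosed_closure
      exact suitable_iUnion_chain hKcl _
        (fun a b hab => Tchain_mono K e hab) (fun γ => ih γ γ.2)
    · rw [Tchain_nonlimit K e hl]
      exact clos_suitable hKD _

lemma Tchain_covers (s : τ) (hs : ∃ γ, e γ = s) : ∃ δ, s ∈ Tchain K e δ := by
  obtain ⟨γ, rfl⟩ := hs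
  by_cases hl : IsLim γ
  · obtain ⟨δ, hγδ, hδ⟩ := exists_nonlim_gt γ
    refine ⟨δ, ?_⟩
    rw [Tchain_nonlimit K e hδ]
    exact subset_clos K _ (Set.mem_union_left _ ⟨γ, hγδ.le, rfl⟩)
  · refine ⟨γ, ?_⟩
    rw [Tchain_nonlimit K e hl]
    exact subset_clos K _ (Set.mem_union_left _ ⟨γ, le_refl γ, rfl⟩)

end Statement12Aux

namespace Statement12Aux

variable {τ : Type u} (K : Set (τ → unitInterval)) (e : Idx.{u} → τ)

/-- the tower of chopped images along the transfinite chain. -/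
noncomputable def fwdTower : Tower.{u, u} Idx.{u} where
  S δ := ↥(chop (Tchain K e δ) '' K)
  topo _ := inferInstance
  r α β h y := ⟨chop (Tchain K e α) y.1, by
    obtain ⟨k, hk, hky⟩ := y.2
    exact ⟨k, hk, by rw [← hky, chop_chop (Tchain_mono K e h)]⟩⟩

lemma fwdTower_r_apply {α β : Idx.{u}} (h : α ≤ β) (y : (fwdTower K e).S β) :
    ((fwdTower K e).r h y).1 = chop (Tchain K e α) y.1 := rfl

lemma fwdTower_val_eq_chop {δ : Idx.{u}} (y : (fwdTower K e).S δ) :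
    chop (Tchain K e δ) y.1 = y.1 := by
  obtain ⟨k, _, hky⟩ := y.2
  rw [← hky, chop_chop subset_rfl]

lemma fwdTower_val_zero {δ : Idx.{u}} (y : (fwdTower K e).S δ) {t : τ}
    (ht : t ∉ Tchain K e δ) : y.1 t = 0 := by
  rw [← fwdTower_val_eq_chop K e y]
  exact chop_apply_not_mem ht

section Props

lemma fwdTower_image_subset (hK : IsCompact K) (hKD : K = closure (Dset K)) (δ : Idx.{u}) : chop (Tchain K e δ) '' K ⊆ K := by
  have h1 : chop (Tchain K e δ) '' K ⊆ chop (Tchain K e δ) '' closure (Dset K) := by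
    rw [← hKD]
  refine h1.trans ?_
  have h2 : chop (Tchain K e δ) '' closure (Dset K) ⊆
      closure (chop (Tchain K e δ) '' (Dset K)) :=
    image_closure_subset_closure_image (chop_continuous _)
  refine h2.trans ?_
  have h3 : chop (Tchain K e δ) '' (Dset K) ⊆ K := by
    rintro _ ⟨d, hd, rfl⟩
    exact Tchain_suitable K e hKD δ d hd
  calc closure (chop (Tchain K e δ) '' (Dset K)) ⊆ closure K := closure_mono h3
    _ = K := (hK.isClosed).closure_eq

lemma fwdTower_compact (hK : IsCompact K) (δ : Idx.{u}) : CompactSpace ((fwdTower K e).S δ) :=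
  isCompact_iff_compactSpace.1 (hK.image (chop_continuous _))

lemma fwdTower_metrizable (hK : IsCompact K) (δ : Idx.{u}) :
    TopologicalSpace.MetrizableSpace ((fwdTower K e).S δ) := by
  have : Countable ↥(Tchain K e δ) := (Tchain_countable K e δ).to_subtype
  haveI hcs := fwdTower_compact K e hK δ
  set ρ : (fwdTower K e).S δ → (↥(Tchain K e δ) → unitInterval) :=
    fun y t => y.1 t.1 with hρ
  have hρc : Continuous ρ :=
    continuous_pi fun t => (continuous_apply t.1).comp continuous_subtype_val
  have hρi : Function.Injective ρ := by
    intro y z hyz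
    apply Subtype.ext
    funext t
    by_cases ht : t ∈ Tchain K e δ
    · exact congrFun hyz ⟨t, ht⟩
    · rw [fwdTower_val_zero K e y ht, fwdTower_val_zero K e z ht]
  exact (hρc.isClosedEmbedding hρi).isEmbedding.metrizableSpace

lemma fwdTower_retraction (hK : IsCompact K) (hKD : K = closure (Dset K)) {α β : Idx.{u}} (h : α ≤ β) :
    IsRetraction ((fwdTower K e).r h) := by
  have hcont : Continuous ((fwdTower K e).r h) := by
    apply Continuous.subtype_mk
    exact (chop_continuous _).comp continuous_subtype_val
  have hsec : ∀ y : (fwdTower K e).S α, y.1 ∈ chop (Tchain K e β) '' K := by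
    intro y
    refine ⟨y.1, fwdTower_image_subset K e hK hKD α y.2, ?_⟩
    refine chop_eq_self fun t ht => ?_
    exact fwdTower_val_zero K e y fun htα => ht (Tchain_mono K e h htα)
  set g : (fwdTower K e).S α → (fwdTower K e).S β := fun y => ⟨y.1, hsec y⟩ with hg
  have hgc : Continuous g := Continuous.subtype_mk continuous_subtype_val _
  have hrg : ∀ y, (fwdTower K e).r h (g y) = y := by
    intro y
    apply Subtype.ext
    rw [fwdTower_r_apply]
    exact fwdTower_val_eq_chop K e y
  refine ⟨hcont, ?_, g, hgc, funext hrg⟩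
  intro z
  exact ⟨g z, hrg z⟩

lemma fwdTower_isContInvSeq (hK : IsCompact K) (hKD : K = closure (Dset K)) : (fwdTower K e).IsContInvSeq where
  compact := fwdTower_compact K e hK
  t2 := fun δ => inferInstanceAs (T2Space ↥(chop (Tchain K e δ) '' K))
  continuous := fun _ _ h => (fwdTower_retraction K e hK hKD h).1
  surjective := fun _ _ h => (fwdTower_retraction K e hK hKD h).2.1
  map_id := fun α y => Subtype.ext (by
    rw [fwdTower_r_apply]; exact fwdTower_val_eq_chop K e y)
  map_comp := fun α β γ h₁ h₂ y => Subtype.ext (by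
    rw [fwdTower_r_apply, fwdTower_r_apply, fwdTower_r_apply,
      chop_chop (Tchain_mono K e h₁)])
  limit_inj := by
    intro δ h1 h2 x y hxy
    have hlim : IsLim δ := ⟨h1, h2⟩
    apply Subtype.ext
    funext t
    by_cases ht : t ∈ Tchain K e δ
    · rw [Tchain_limit K e hlim] at ht
      obtain ⟨⟨γ, hγ⟩, htγ⟩ := Set.mem_iUnion.1 ht
      have := congrArg Subtype.val (hxy γ hγ)
      rw [fwdTower_r_apply, fwdTower_r_apply] at this
      have h4 := congrFun this t
      rwa [chop_apply_mem htγ, chop_apply_mem htγ] at h4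
    · rw [fwdTower_val_zero K e x ht, fwdTower_val_zero K e y ht]

end Props

end Statement12Aux

namespace Statement12Aux

lemma forward {X : Type u} [TopologicalSpace X] [CompactSpace X] [T2Space X]
    (hw : tweight X ≤ Cardinal.aleph 1) (hv : IsValdivia X) :
    ∃ T : Tower.{u, u} Idx.{u}, T.IsContInvSeq ∧
      (∀ α, TopologicalSpace.MetrizableSpace (T.S α)) ∧
      (∀ ⦃α β : Idx.{u}⦄ (h : α ≤ β), IsRetraction (T.r h)) ∧
      Nonempty (X ≃ₜ T.Lim) := by
  obtain ⟨τ, h₁, hne, hcard, hemb, hsig⟩ := exists_small_valdivia_embedding hw hv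
  set K : Set (τ → unitInterval) := Set.range h₁ with hKdef
  have hK : IsCompact K := isCompact_range hemb.continuous
  have hKD : K = closure (Dset K) := hsig
  -- a surjective enumeration of the coordinates
  obtain ⟨f⟩ : Nonempty (τ ↪ Idx.{u}) := by
    rw [← Cardinal.le_def, mk_Idx]; exact hcard
  set e : Idx.{u} → τ := Function.invFun f with he
  have hesurj : Function.Surjective e := Function.invFun_surjective f.injective
  have hcover : ∀ t : τ, ∃ δ, t ∈ Tchain K e δ :=
    fun t => Tchain_covers K e t (hesurj t)
  refine ⟨fwdTower K e, fwdTower_isContInvSeq K e hK hKD,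
    fwdTower_metrizable K e hK, fun α β h => fwdTower_retraction K e hK hKD h, ?_⟩
  haveI ht2 : ∀ δ, T2Space ((fwdTower K e).S δ) :=
    fun δ => inferInstanceAs (T2Space ↥(chop (Tchain K e δ) '' K))
  -- the canonical map into the limit
  set Φfun : X → ∀ δ, (fwdTower K e).S δ :=
    fun x δ => ⟨chop (Tchain K e δ) (h₁ x), ⟨h₁ x, ⟨x, rfl⟩, rfl⟩⟩ with hΦfun
  have hthread : ∀ x, ∀ ⦃α β : Idx.{u}⦄ (h : α ≤ β),
      (fwdTower K e).r h (Φfun x β) = Φfun x α := by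
    intro x α β h
    apply Subtype.ext
    rw [fwdTower_r_apply]
    exact chop_chop (Tchain_mono K e h) _
  set Φ : X → (fwdTower K e).Lim := fun x => ⟨Φfun x, hthread x⟩ with hΦ
  have hΦc : Continuous Φ := by
    apply Continuous.subtype_mk
    refine continuous_pi fun δ => Continuous.subtype_mk ?_ _
    exact (chop_continuous _).comp hemb.continuous
  have hΦi : Function.Injective Φ := by
    intro x y hxy
    apply hemb.injective
    funext t
    obtain ⟨δ, hδ⟩ := hcover t
    have h1 : Φfun x δ = Φfun y δ := by
      have := congrArg Subtype.val hxy
      exact congrFun this δ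
    have h2 := congrFun (congrArg Subtype.val h1) t
    simpa only [hΦfun, chop_apply_mem hδ] using h2
  have hΦs : Function.Surjective Φ := by
    intro y
    set C : Idx.{u} → Set (τ → unitInterval) :=
      fun δ => K ∩ {g | chop (Tchain K e δ) g = (y.1 δ).1} with hC
    have hCcl : ∀ δ, IsClosed (C δ) :=
      fun δ => hK.isClosed.inter (isClosed_eq (chop_continuous _) continuous_const)
    have hCcp : ∀ δ, IsCompact (C δ) :=
      fun δ => hK.inter_right (isClosed_eq (chop_continuous _) continuous_const)
    have hCne : ∀ δ, (C δ).Nonempty := by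
      intro δ
      exact ⟨(y.1 δ).1, fwdTower_image_subset K e hK hKD δ (y.1 δ).2,
        fwdTower_val_eq_chop K e (y.1 δ)⟩
    have hsub : ∀ {α β : Idx.{u}}, α ≤ β → C β ⊆ C α := by
      intro α β h g hg
      refine ⟨hg.1, ?_⟩
      have h1 : chop (Tchain K e α) g = chop (Tchain K e α) (chop (Tchain K e β) g) :=
        (chop_chop (Tchain_mono K e h) g).symm
      rw [Set.mem_setOf_eq, h1, hg.2]
      have := congrArg Subtype.val (y.2 h)
      rwa [fwdTower_r_apply] at this
    have hdir : Directed (fun a b => a ⊇ b) C := by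
      intro δ₁ δ₂
      exact ⟨max δ₁ δ₂, hsub (le_max_left _ _), hsub (le_max_right _ _)⟩
    obtain ⟨Z, hZ⟩ := IsCompact.nonempty_iInter_of_directed_nonempty_isCompact_isClosed
      C hdir hCne hCcp hCcl
    have hZK : Z ∈ K := (Set.mem_iInter.1 hZ (Classical.arbitrary _)).1
    obtain ⟨x, hx⟩ := hZK
    refine ⟨x, ?_⟩
    apply Subtype.ext
    funext δ
    apply Subtype.ext
    show chop (Tchain K e δ) (h₁ x) = (y.1 δ).1
    rw [hx]
    exact (Set.mem_iInter.1 hZ δ).2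
  exact ⟨(Continuous.homeoOfEquivCompactToT2
    (f := Equiv.ofBijective Φ ⟨hΦi, hΦs⟩) hΦc)⟩

end Statement12Aux

namespace Statement12Aux

/-- `δ` has an immediate predecessor. -/
def HasPred (δ : Idx.{u}) : Prop := ∃ p, p < δ ∧ ∀ γ, γ < δ → γ ≤ p

noncomputable def predIdx (δ : Idx.{u}) (h : HasPred δ) : Idx.{u} := h.choose

lemma predIdx_lt (δ : Idx.{u}) (h : HasPred δ) : predIdx δ h < δ := h.choose_spec.1

lemma predIdx_le (δ : Idx.{u}) (h : HasPred δ) : predIdx δ h ≤ δ := (predIdx_lt δ h).le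

lemma predIdx_max (δ : Idx.{u}) (h : HasPred δ) : ∀ γ, γ < δ → γ ≤ predIdx δ h :=
  h.choose_spec.2

lemma isLim_premise {δ : Idx.{u}} (hp : ¬ HasPred δ) {γ : Idx.{u}} (hγ : γ < δ) :
    ∀ α, α < δ → ∃ β, α < β ∧ β < δ := by
  intro α hα
  by_contra hcon
  push_neg at hcon
  exact hp ⟨α, hα, fun γ' hγ' => by
    by_contra h'
    exact absurd hγ' (not_lt.2 (hcon γ' (not_le.1 h')))⟩

/-- the positive part of the difference of two points of the unit interval. -/
noncomputable def pospart (a b : unitInterval) : unitInterval :=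
  ⟨max ((a : ℝ) - b) 0, le_max_right _ _, by
    apply max_le
    · have := a.2.2; have := b.2.1; linarith
    · norm_num⟩

lemma pospart_self (a : unitInterval) : pospart a a = 0 := by
  apply Subtype.ext
  simp [pospart]

lemma pospart_recover (a b : unitInterval) :
    (a : ℝ) = (b : ℝ) + pospart a b - pospart b a := by
  simp only [pospart]
  rcases le_total (a : ℝ) (b : ℝ) with h | h
  · rw [max_eq_right (by linarith), max_eq_left (by linarith)]
    ring
  · rw [max_eq_left (by linarith), max_eq_right (by linarith)]
    ring

lemma pospart_inj {a a' b : unitInterval} (h1 : pospart a b = pospart a' b)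
    (h2 : pospart b a = pospart b a') : a = a' := by
  apply Subtype.ext
  have := pospart_recover a b
  rw [h1, h2, ← pospart_recover a' b] at this
  exact this

lemma continuous_pospart : Continuous fun p : unitInterval × unitInterval =>
    pospart p.1 p.2 := by
  apply Continuous.subtype_mk
  exact ((continuous_subtype_val.comp continuous_fst).sub
    (continuous_subtype_val.comp continuous_snd)).max continuous_const

/-- a compact metrizable space embeds continuously and injectively into the Hilbert cube. -/
lemma exists_embedding_cube (Y : Type u) [TopologicalSpace Y] [CompactSpace Y] [T2Space Y]
    [TopologicalSpace.MetrizableSpace Y] :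
    ∃ e : Y → ℕ → unitInterval, Continuous e ∧ Function.Injective e := by
  obtain ⟨f, hf⟩ := TopologicalSpace.exists_embedding_l_infty Y
  -- squash ℝ into the unit interval
  set g : ℝ → ℝ := fun r => (1 + r / (1 + |r|)) / 2 with hg
  have habs : ∀ r : ℝ, |r / (1 + |r|)| < 1 := by
    intro r
    have h1 : (0:ℝ) < 1 + |r| := by positivity
    rw [abs_div, abs_of_pos h1, div_lt_one h1]
    linarith [abs_nonneg r]
  have hgmem : ∀ r : ℝ, g r ∈ Set.Icc (0:ℝ) 1 := by
    intro r
    have := habs r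
    rw [abs_lt] at this
    constructor <;> [simp only [hg]; simp only [hg]] <;> nlinarith [this.1, this.2]
  have hginj : Function.Injective g := by
    have hkey : ∀ r : ℝ, (r / (1 + |r|)) / (1 - |r / (1 + |r|)|) = r := by
      intro r
      have h1 : (0:ℝ) < 1 + |r| := by positivity
      rw [abs_div, abs_of_pos h1]
      field_simp
      ring
    intro r s hrs
    have h2 : r / (1 + |r|) = s / (1 + |s|) := by
      simp only [hg] at hrs
      linarith
    calc r = (r / (1 + |r|)) / (1 - |r / (1 + |r|)|) := (hkey r).symm
      _ = (s / (1 + |s|)) / (1 - |s / (1 + |s|)|) := by rw [h2]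
      _ = s := hkey s
  have hgc : Continuous g := by
    have h1 : Continuous fun r : ℝ => r / (1 + |r|) := by
      apply Continuous.div continuous_id (by continuity)
      intro r; positivity
    continuity
  refine ⟨fun y n => ⟨g (f y n), hgmem _⟩, ?_, ?_⟩
  · refine continuous_pi fun n => Continuous.subtype_mk ?_ _
    exact hgc.comp ((continuous_eval_const n).comp hf.continuous)
  · intro y z hyz
    apply hf.injective
    ext n
    have := congrFun hyz n
    exact hginj (congrArg Subtype.val this)

end Statement12Aux

namespace Statement12Aux

/-- extension of a point at level `α` to a full thread using the chosen sections at
successor steps. -/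
lemma exists_ext (T : Tower.{u, u} Idx.{u}) (hT : T.IsContInvSeq)
    (sec : ∀ ⦃α β : Idx.{u}⦄, α ≤ β → T.S α → T.S β)
    (hsec : ∀ ⦃α β : Idx.{u}⦄ (h : α ≤ β) (z : T.S α), T.r h (sec h z) = z)
    (α : Idx.{u}) (z : T.S α) :
    ∃ y : ∀ δ, T.S δ,
      (∀ ⦃γ δ : Idx.{u}⦄ (h : γ ≤ δ), T.r h (y δ) = y γ) ∧
      (∀ (δ : Idx.{u}) (h : δ ≤ α), y δ = T.r h z) ∧
      (∀ (δ : Idx.{u}), ¬ δ ≤ α → ∀ (hp : HasPred δ),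
        y δ = sec (predIdx_le δ hp) (y (predIdx δ hp))) := by
  haveI hcs : ∀ β, CompactSpace (T.S β) := hT.compact
  haveI ht2 : ∀ β, T2Space (T.S β) := hT.t2
  set wf := (wellFounded_lt (α := Idx.{u})) with hwf
  set F : ∀ δ : Idx.{u}, (∀ γ, γ < δ → T.S γ) → T.S δ := fun δ rec =>
    if hδ : δ ≤ α then T.r hδ z
    else if hp : HasPred δ then sec (predIdx_le δ hp) (rec _ (predIdx_lt δ hp))
    else if hne : ∃ w : T.S δ, ∀ γ (hγ : γ < δ), T.r hγ.le w = rec γ hγ then hne.choose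
    else (hT.surjective (not_le.1 hδ).le z).choose
    with hF
  set y : ∀ δ, T.S δ := fun δ => wf.fix F δ with hy
  have hyeq : ∀ δ, y δ = F δ (fun γ _ => y γ) := fun δ => WellFounded.fix_eq wf F δ
  -- coherence by strong induction
  have hco : ∀ δ : Idx.{u}, ∀ γ (h : γ ≤ δ), T.r h (y δ) = y γ := by
    intro δ
    induction δ using wf.induction with
    | _ δ ih =>
      intro γ h
      rcases eq_or_lt_of_le h with rfl | hlt
      · exact hT.map_id _ _
      by_cases hδα : δ ≤ α
      · rw [hyeq δ, hyeq γ]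
        simp only [hF]
        rw [dif_pos hδα, dif_pos (hlt.le.trans hδα)]
        exact hT.map_comp _ _ _
      · by_cases hp : HasPred δ
        · rw [hyeq δ]
          simp only [hF]
          rw [dif_neg hδα, dif_pos hp]
          have hγp : γ ≤ predIdx δ hp := predIdx_max δ hp γ hlt
          have h1 : T.r h (sec (predIdx_le δ hp) (y (predIdx δ hp))) =
              T.r hγp (T.r (predIdx_le δ hp)
                (sec (predIdx_le δ hp) (y (predIdx δ hp)))) :=
            (hT.map_comp hγp (predIdx_le δ hp) _).symm
          rw [h1, hsec]
          exact ih _ (predIdx_lt δ hp) γ hγp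
        · -- limit case: compactness provides a compatible point
          have hne : ∃ w : T.S δ, ∀ γ' (hγ' : γ' < δ), T.r hγ'.le w = y γ' := by
            haveI : Nonempty ↥(Set.Iio δ) := ⟨⟨γ, hlt⟩⟩
            set Cs : ↥(Set.Iio δ) → Set (T.S δ) :=
              fun γ' => (T.r γ'.2.le) ⁻¹' {y γ'.1} with hCs
            have hCcl : ∀ γ', IsClosed (Cs γ') :=
              fun γ' => (isClosed_singleton).preimage (hT.continuous _)
            have hCcp : ∀ γ', IsCompact (Cs γ') := fun γ' => (hCcl γ').isCompact
            have hCne : ∀ γ', (Cs γ').Nonempty := by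
              intro γ'
              obtain ⟨w, hw⟩ := hT.surjective γ'.2.le (y γ'.1)
              exact ⟨w, hw⟩
            have hCsub : ∀ {γ₁ γ₂ : ↥(Set.Iio δ)}, γ₁.1 ≤ γ₂.1 → Cs γ₂ ⊆ Cs γ₁ := by
              intro γ₁ γ₂ h12 w hw
              simp only [hCs, Set.mem_preimage, Set.mem_singleton_iff] at hw ⊢
              have h2 : T.r γ₁.2.le w = T.r h12 (T.r γ₂.2.le w) :=
                (hT.map_comp h12 γ₂.2.le w).symm
              rw [h2, hw]
              exact ih γ₂.1 γ₂.2 γ₁.1 h12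
            have hdir : Directed (fun a b => a ⊇ b) Cs := by
              intro γ₁ γ₂
              rcases le_total γ₁.1 γ₂.1 with h12 | h21
              · exact ⟨γ₂, hCsub h12, subset_rfl⟩
              · exact ⟨γ₁, subset_rfl, hCsub h21⟩
            obtain ⟨w, hw⟩ := IsCompact.nonempty_iInter_of_directed_nonempty_isCompact_isClosed
              Cs hdir hCne hCcp hCcl
            refine ⟨w, fun γ' hγ' => ?_⟩
            have := Set.mem_iInter.1 hw ⟨γ', hγ'⟩
            simpa [hCs] using this
          rw [hyeq δ]
          simp only [hF]
          rw [dif_neg hδα, dif_neg hp, dif_pos hne]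
          exact hne.choose_spec γ hlt
  refine ⟨y, fun γ δ h => hco δ γ h, ?_, ?_⟩
  · intro δ hδ
    rw [hyeq δ]
    simp only [hF]
    rw [dif_pos hδ]
  · intro δ hδ hp
    rw [hyeq δ]
    simp only [hF]
    rw [dif_neg hδ, dif_pos hp]

end Statement12Aux

namespace Statement12Aux

lemma backward {X : Type u} [TopologicalSpace X] [CompactSpace X] [T2Space X]
    (T : Tower.{u, u} Idx.{u}) (hT : T.IsContInvSeq)
    (hmet : ∀ α, TopologicalSpace.MetrizableSpace (T.S α))
    (hret : ∀ ⦃α β : Idx.{u}⦄ (h : α ≤ β), IsRetraction (T.r h))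
    (hhom : Nonempty (X ≃ₜ T.Lim)) : IsValdivia X := by
  obtain ⟨φ⟩ := hhom
  haveI hcs : ∀ β, CompactSpace (T.S β) := hT.compact
  haveI ht2 : ∀ β, T2Space (T.S β) := hT.t2
  -- chosen sections
  set sec : ∀ ⦃α β : Idx.{u}⦄, α ≤ β → T.S α → T.S β :=
    fun α β h => ((hret h).2.2).choose with hsecdef
  have hsecc : ∀ ⦃α β : Idx.{u}⦄ (h : α ≤ β), Continuous (sec h) :=
    fun α β h => ((hret h).2.2).choose_spec.1
  have hsecr : ∀ ⦃α β : Idx.{u}⦄ (h : α ≤ β) (z : T.S α), T.r h (sec h z) = z :=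
    fun α β h z => congrFun ((hret h).2.2).choose_spec.2 z
  -- chosen embeddings into the Hilbert cube
  have hembex : ∀ δ, ∃ e : T.S δ → ℕ → unitInterval, Continuous e ∧ Function.Injective e := by
    intro δ
    haveI := hmet δ
    exact exists_embedding_cube _
  choose e hec hei using hembex
  -- the coordinate blocks
  set base : ∀ δ (_ : HasPred δ), T.S δ → ℕ → unitInterval :=
    fun δ hp u => e δ (sec (predIdx_le δ hp) (T.r (predIdx_le δ hp) u)) with hbase
  set w : ∀ δ, T.S δ → ℕ × Bool → unitInterval := fun δ u nb =>
    if hp : HasPred δ then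
      (if nb.2 then pospart (e δ u nb.1) (base δ hp u nb.1)
        else pospart (base δ hp u nb.1) (e δ u nb.1))
    else if _ : ∃ γ, γ < δ then 0
    else (if nb.2 then e δ u nb.1 else 0)
    with hw
  set H : T.Lim → (Idx.{u} × ℕ × Bool) → unitInterval :=
    fun x c => w c.1 (x.1 c.1) c.2 with hH
  -- continuity
  have hwcont : ∀ δ nb, Continuous fun u => w δ u nb := by
    intro δ nb
    simp only [hw]
    have h1 : Continuous fun u => e δ u nb.1 := (continuous_apply nb.1).comp (hec δ)
    by_cases hp : HasPred δ
    · simp only [dif_pos hp]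
      have h2 : Continuous fun u => base δ hp u nb.1 := by
        simp only [hbase]
        exact (continuous_apply nb.1).comp
          ((hec δ).comp ((hsecc (predIdx_le δ hp)).comp (hT.continuous _)))
      by_cases hb : nb.2
      · simp only [if_pos hb]
        exact continuous_pospart.comp (h1.prodMk h2)
      · simp only [if_neg hb]
        exact continuous_pospart.comp (h2.prodMk h1)
    · simp only [dif_neg hp]
      by_cases hlt : ∃ γ, γ < δ
      · simp only [dif_pos hlt]; exact continuous_const
      · simp only [dif_neg hlt]
        by_cases hb : nb.2
        · simp only [if_pos hb]; exact h1
        · simp only [if_neg hb]; exact continuous_const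
  have hHc : Continuous H := by
    refine continuous_pi fun c => ?_
    exact (hwcont c.1 c.2).comp ((continuous_apply c.1).comp continuous_subtype_val)
  -- the limit is compact
  haveI hLimCompact : CompactSpace T.Lim := by
    have hcl : IsClosed {x : ∀ δ, T.S δ |
        ∀ ⦃γ δ' : Idx.{u}⦄ (h : γ ≤ δ'), T.r h (x δ') = x γ} := by
      have heq : {x : ∀ δ, T.S δ | ∀ ⦃γ δ' : Idx.{u}⦄ (h : γ ≤ δ'), T.r h (x δ') = x γ} =
          ⋂ (γ : Idx.{u}) (δ' : Idx.{u}) (h : γ ≤ δ'), {x | T.r h (x δ') = x γ} := by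
        ext x
        simp only [Set.mem_setOf_eq, Set.mem_iInter]
      rw [heq]
      refine isClosed_iInter fun γ => isClosed_iInter fun δ' => isClosed_iInter fun h => ?_
      exact isClosed_eq ((hT.continuous h).comp (continuous_apply δ')) (continuous_apply γ)
    exact isCompact_iff_compactSpace.1 hcl.isCompact
  -- injectivity
  have hHinj : Function.Injective H := by
    intro x x' hxx
    apply Subtype.ext
    funext δ
    induction δ using (wellFounded_lt (α := Idx.{u})).induction with
    | _ δ ih =>
      by_cases hp : HasPred δ
      · have hpx : T.r (predIdx_le δ hp) (x.1 δ) = x.1 (predIdx δ hp) := x.2 _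
        have hpx' : T.r (predIdx_le δ hp) (x'.1 δ) = x'.1 (predIdx δ hp) := x'.2 _
        have hbb : base δ hp (x.1 δ) = base δ hp (x'.1 δ) := by
          simp only [hbase]
          rw [hpx, hpx', ih _ (predIdx_lt δ hp)]
        have hcoord : ∀ n : ℕ, e δ (x.1 δ) n = e δ (x'.1 δ) n := by
          intro n
          have h1 := congrFun hxx (δ, n, true)
          have h2 := congrFun hxx (δ, n, false)
          simp only [hH, hw, dif_pos hp, if_pos, if_neg] at h1 h2
          rw [show base δ hp (x.1 δ) n = base δ hp (x'.1 δ) n from congrFun hbb n] at h1 h2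
          exact pospart_inj h1 h2
        exact hei δ (funext hcoord)
      · by_cases hlt : ∃ γ, γ < δ
        · obtain ⟨γ0, hγ0⟩ := hlt
          refine hT.limit_inj δ ⟨γ0, hγ0⟩ (isLim_premise hp hγ0) _ _ fun α hα => ?_
          rw [x.2 hα.le, x'.2 hα.le]
          exact ih α hα
        · have hcoord : ∀ n : ℕ, e δ (x.1 δ) n = e δ (x'.1 δ) n := by
            intro n
            have h1 := congrFun hxx (δ, n, true)
            simpa only [hH, hw, dif_neg hp, dif_neg hlt, if_pos] using h1
          exact hei δ (funext hcoord)
  have hHemb : Topology.IsEmbedding H := (hHc.isClosedEmbedding hHinj).isEmbedding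
  -- the sigma condition
  have hHsig : Set.range H = closure (Set.range H ∩ SigmaProd (Idx.{u} × ℕ × Bool)) := by
    apply le_antisymm
    · rintro _ ⟨x, rfl⟩
      -- extension threads
      have hex := fun α => exists_ext T hT sec hsecr α (x.1 α)
      choose Y hY1 hY2 hY3 using hex
      set Yl : Idx.{u} → T.Lim := fun α => ⟨Y α, hY1 α⟩ with hYl
      have key1 : ∀ α δ (h : δ ≤ α), Y α δ = x.1 δ := by
        intro α δ h
        rw [hY2 α δ h, x.2 h]
      have hmem : ∀ α, H (Yl α) ∈ Set.range H ∩ SigmaProd (Idx.{u} × ℕ × Bool) := by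
        intro α
        refine ⟨⟨Yl α, rfl⟩, ?_⟩
        have hsupp : {c : Idx.{u} × ℕ × Bool | H (Yl α) c ≠ 0} ⊆
            (Set.Iic α) ×ˢ (Set.univ : Set (ℕ × Bool)) := by
          rintro ⟨δ, nb⟩ hc
          simp only [Set.mem_setOf_eq] at hc
          by_contra hout
          simp only [Set.mem_prod, Set.mem_Iic, Set.mem_univ, and_true] at hout
          refine hc ?_
          by_cases hp : HasPred δ
          · have hYδ : Y α δ = sec (predIdx_le δ hp) (Y α (predIdx δ hp)) :=
              hY3 α δ hout hp
            have hbeq : base δ hp (Y α δ) = e δ (Y α δ) := by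
              simp only [hbase]
              rw [show T.r (predIdx_le δ hp) (Y α δ) = Y α (predIdx δ hp) from
                hY1 α (predIdx_le δ hp), hYδ]
            show w δ (Y α δ) nb = 0
            simp only [hw, dif_pos hp]
            rw [congrFun hbeq nb.1]
            by_cases hb : nb.2
            · rw [if_pos hb]; exact pospart_self _
            · rw [if_neg hb]; exact pospart_self _
          · have hlt : ∃ γ, γ < δ := ⟨α, not_le.1 hout⟩
            show w δ (Y α δ) nb = 0
            simp only [hw, dif_neg hp, dif_pos hlt]
        exact Set.Countable.mono hsupp ((countable_Iic α).prod Set.countable_univ)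
      have htend : Tendsto (fun α => H (Yl α)) atTop (nhds (H x)) := by
        rw [tendsto_pi_nhds]
        rintro ⟨δ, nb⟩
        refine Filter.Tendsto.congr' ?_ tendsto_const_nhds
        filter_upwards [Filter.eventually_ge_atTop δ] with α hα
        show H x (δ, nb) = H (Yl α) (δ, nb)
        simp only [hH]
        rw [show (Yl α).1 δ = x.1 δ from key1 α δ hα]
      exact mem_closure_of_tendsto htend (Filter.Eventually.of_forall hmem)
    · calc closure (Set.range H ∩ SigmaProd (Idx.{u} × ℕ × Bool))
          ⊆ closure (Set.range H) := closure_mono Set.inter_subset_left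
        _ = Set.range H := (isCompact_range hHc).isClosed.closure_eq
  -- transfer along the homeomorphism
  refine ⟨Idx.{u} × ℕ × Bool, H ∘ φ, hHemb.comp φ.isEmbedding, ?_⟩
  have hr : Set.range (H ∘ φ) = Set.range H := by
    rw [Set.range_comp, φ.surjective.range_eq, Set.image_univ]
  rw [hr]
  exact hHsig

end Statement12Aux

end Statement12AuxSection

/-- a compact Hausdorff space of weight at most `ℵ₁` is Valdivia compact
iff it is homeomorphic to the limit of a continuous inverse sequence, indexed by `ω₁`,
of compact metrizable spaces whose bonding maps are retractions. -/
theorem statement12 {X : Type u} [TopologicalSpace X] [CompactSpace X] [T2Space X]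
    (hw : tweight X ≤ Cardinal.aleph 1) :
    IsValdivia X ↔
      ∃ T : Tower.{u, u} (Cardinal.aleph 1 : Cardinal.{u}).ord.ToType,
        T.IsContInvSeq ∧
        (∀ α, TopologicalSpace.MetrizableSpace (T.S α)) ∧
        (∀ ⦃α β : (Cardinal.aleph 1 : Cardinal.{u}).ord.ToType⦄ (h : α ≤ β),
          IsRetraction (T.r h)) ∧
        Nonempty (X ≃ₜ T.Lim) := by
  constructor
  · intro hv
    exact Statement12Aux.forward hw hv
  · rintro ⟨T, hT, hmet, hret, hhom⟩
    exact Statement12Aux.backward T hT hmet hret hhom
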